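/- Let X₀ be a real n × m₀ matrix and X₁ a real n × m₁ matrix, let X = [X₀, X₁] be the n × (m₀ + m₁) matrix obtained by concatenating their columns, and set m = m₀ + m₁. Assume that XᵀX and X₀ᵀX₀ are invertible. Then the matrix P = R_{X₀} − R_X satisfies: (1) P is symmetric (Pᵀ = P); (2) P is idempotent (P² = P); (3) P is positive semidefinite; and (4) rank(P) = m₁. -/

import Mathlib

open Matrix

/-- The residual-forming matrix `R_A = I - A (Aᵀ A)⁻¹ Aᵀ` of a matrix `A`. -/
noncomputable def residualMatrix {n k : Type*} [Fintype n] [Fintype k] [DecidableEq n]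
    [DecidableEq k] (A : Matrix n k ℝ) : Matrix n n ℝ :=
  1 - A * (Aᵀ * A)⁻¹ * Aᵀ

/-- The hat matrix `H_A = A (Aᵀ A)⁻¹ Aᵀ`. -/
noncomputable def hatMatrix {n k : Type*} [Fintype n] [Fintype k] [DecidableEq n]
    [DecidableEq k] (A : Matrix n k ℝ) : Matrix n n ℝ :=
  A * (Aᵀ * A)⁻¹ * Aᵀ

lemma hat_transpose {n k : Type*} [Fintype n] [Fintype k] [DecidableEq n] [DecidableEq k]
    (A : Matrix n k ℝ) : (hatMatrix A)ᵀ = hatMatrix A := by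
  simp only [hatMatrix, transpose_mul, transpose_transpose, transpose_nonsing_inv]
  rw [Matrix.mul_assoc]

lemma hat_mul_self {n k : Type*} [Fintype n] [Fintype k] [DecidableEq n] [DecidableEq k]
    (A : Matrix n k ℝ) (h : IsUnit (Aᵀ * A)) : hatMatrix A * A = A := by
  have hd : IsUnit (Aᵀ * A).det := (Matrix.isUnit_iff_isUnit_det _).mp h
  rw [hatMatrix]
  simp only [Matrix.mul_assoc]
  rw [Matrix.nonsing_inv_mul _ hd, Matrix.mul_one]

lemma hat_idem {n k : Type*} [Fintype n] [Fintype k] [DecidableEq n] [DecidableEq k]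
    (A : Matrix n k ℝ) (h : IsUnit (Aᵀ * A)) : hatMatrix A * hatMatrix A = hatMatrix A := by
  have e1 : hatMatrix A * hatMatrix A = (hatMatrix A * A) * ((Aᵀ * A)⁻¹ * Aᵀ) := by
    rw [hatMatrix]; simp only [Matrix.mul_assoc]
  rw [e1, hat_mul_self A h, hatMatrix, Matrix.mul_assoc]

lemma hat_trace {n k : Type*} [Fintype n] [Fintype k] [DecidableEq n] [DecidableEq k]
    (A : Matrix n k ℝ) (h : IsUnit (Aᵀ * A)) : (hatMatrix A).trace = Fintype.card k := by
  have hd : IsUnit (Aᵀ * A).det := (Matrix.isUnit_iff_isUnit_det _).mp h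
  rw [hatMatrix, Matrix.trace_mul_comm, ← Matrix.mul_assoc,
    Matrix.mul_nonsing_inv _ hd, Matrix.trace_one]

lemma rank_cast_eq_trace_of_idem {N : ℕ} (A : Matrix (Fin N) (Fin N) ℝ)
    (h : A * A = A) : (A.rank : ℝ) = A.trace := by
  set f := Matrix.mulVecLin A with hf
  have hff : f ∘ₗ f = f := by rw [hf, ← Matrix.mulVecLin_mul, h]
  have hproj : LinearMap.IsProj (LinearMap.range f) f := by
    refine ⟨fun x => LinearMap.mem_range_self f x, ?_⟩
    rintro x ⟨y, rfl⟩
    exact congrFun (congrArg DFunLike.coe hff) y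
  have ht := LinearMap.IsProj.trace hproj
  have htr : LinearMap.trace ℝ (Fin N → ℝ) f = A.trace := by
    rw [LinearMap.trace_eq_matrix_trace ℝ (Pi.basisFun ℝ (Fin N)),
      LinearMap.toMatrix_eq_toMatrix', hf, ← Matrix.toLin'_apply', LinearMap.toMatrix'_toLin']
  rw [← htr, ht, Matrix.rank]

/-- With `X = [X₀, X₁]` and `XᵀX`, `X₀ᵀX₀` invertible, the matrix
`P = R_{X₀} − R_X` is symmetric, idempotent, positive semidefinite, and has rank `m₁`. -/
theorem stmt_4 {n m0 m1 : ℕ}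
    (X0 : Matrix (Fin n) (Fin m0) ℝ) (X1 : Matrix (Fin n) (Fin m1) ℝ)
    (X : Matrix (Fin n) (Fin m0 ⊕ Fin m1) ℝ) (hX : X = fromCols X0 X1)
    (hXinv : IsUnit (Xᵀ * X)) (hX0inv : IsUnit (X0ᵀ * X0))
    (P : Matrix (Fin n) (Fin n) ℝ)
    (hP : P = residualMatrix X0 - residualMatrix X) :
    Pᵀ = P ∧ P * P = P ∧ P.PosSemidef ∧ P.rank = m1 := by
  have hPalt : P = hatMatrix X - hatMatrix X0 := by
    rw [hP, residualMatrix, residualMatrix, hatMatrix, hatMatrix]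
    abel
  -- H_X * X0 = X0
  have hXX0 : hatMatrix X * X0 = X0 := by
    have h1 : hatMatrix X * fromCols X0 X1 = fromCols X0 X1 := by
      rw [← hX]; exact hat_mul_self X hXinv
    rw [Matrix.mul_fromCols, fromCols_ext_iff] at h1
    exact h1.1
  have hHH : hatMatrix X * hatMatrix X0 = hatMatrix X0 := by
    have e1 : hatMatrix X * hatMatrix X0 = (hatMatrix X * X0) * ((X0ᵀ * X0)⁻¹ * X0ᵀ) := by
      simp only [hatMatrix]; simp only [Matrix.mul_assoc]
    rw [e1, hXX0, hatMatrix, Matrix.mul_assoc]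
  have hHH' : hatMatrix X0 * hatMatrix X = hatMatrix X0 := by
    have := congrArg Matrix.transpose hHH
    rwa [Matrix.transpose_mul, hat_transpose, hat_transpose] at this
  have hsymm : Pᵀ = P := by
    rw [hPalt, Matrix.transpose_sub, hat_transpose, hat_transpose]
  have hidem : P * P = P := by
    rw [hPalt, Matrix.sub_mul, Matrix.mul_sub, Matrix.mul_sub, hat_idem X hXinv,
      hat_idem X0 hX0inv, hHH, hHH']
    abel
  have hpsd : P.PosSemidef := by
    have := Matrix.posSemidef_conjTranspose_mul_self P
    rwa [Matrix.conjTranspose_eq_transpose_of_trivial, hsymm, hidem] at this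
  refine ⟨hsymm, hidem, hpsd, ?_⟩
  have htr : P.trace = m1 := by
    rw [hPalt, Matrix.trace_sub, hat_trace X0 hX0inv]
    rw [hat_trace X hXinv]
    simp only [Fintype.card_sum, Fintype.card_fin]
    push_cast
    ring
  have := rank_cast_eq_trace_of_idem P hidem
  rw [htr] at this
  exact_mod_cast this
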